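/- Let s ∈ ℂ with Re(s) > 2/3. Then the three series ∑_{a,b,c,d ≥ 0, ad−bc=1} ((a+b)(c+d)(a+b+c+d))^{−s}, ∑_{p,q ≥ 1, gcd(p,q)=1} (pq(p+q))^{−s}, and ∑_{p,q ≥ 1} (pq(p+q))^{−s} all converge absolutely; the first two are equal, and ∑_{p,q ≥ 1} (pq(p+q))^{−s} = ζ(3s) · ∑_{p,q ≥ 1, gcd(p,q)=1} (pq(p+q))^{−s}, where ζ is the Riemann zeta function. -/

import Mathlib

abbrev S4' := {q : ℕ × ℕ × ℕ × ℕ // q.1 * q.2.2.2 = q.2.1 * q.2.2.1 + 1}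
abbrev Scop' := {p : ℕ × ℕ // 1 ≤ p.1 ∧ 1 ≤ p.2 ∧ Nat.Coprime p.1 p.2}
abbrev S11' := {p : ℕ × ℕ // 1 ≤ p.1 ∧ 1 ≤ p.2}

lemma key_rel (a b c d : ℕ) (h : a * d = b * c + 1) :
    a * (c + d) = c * (a + b) + 1 := by ring_nf; nlinarith [h]

lemma a_pos (a b c d : ℕ) (h : a * d = b * c + 1) : 1 ≤ a := by
  rcases Nat.eq_zero_or_pos a with h0 | h0
  · subst h0; simp at h
  · exact h0

lemma d_pos (a b c d : ℕ) (h : a * d = b * c + 1) : 1 ≤ d := by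
  rcases Nat.eq_zero_or_pos d with h0 | h0
  · subst h0; simp at h
  · exact h0

lemma cop_of_rel (a b c d : ℕ) (h : a * d = b * c + 1) :
    Nat.Coprime (a + b) (c + d) := by
  have h2 := key_rel a b c d h
  have hg1 : Nat.gcd (a + b) (c + d) ∣ a * (c + d) :=
    Dvd.dvd.mul_left (Nat.gcd_dvd_right _ _) a
  have hg2 : Nat.gcd (a + b) (c + d) ∣ c * (a + b) :=
    Dvd.dvd.mul_left (Nat.gcd_dvd_left _ _) c
  have : Nat.gcd (a + b) (c + d) ∣ 1 := by
    have := Nat.dvd_sub hg1 hg2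
    rwa [h2, Nat.add_sub_cancel_left] at this
  exact Nat.dvd_one.mp this

def f1 : S4' → Scop' := fun x =>
  ⟨(x.1.1 + x.1.2.1, x.1.2.2.1 + x.1.2.2.2),
    le_add_right (a_pos _ _ _ _ x.2),
    by
      have := d_pos x.1.1 x.1.2.1 x.1.2.2.1 x.1.2.2.2 x.2
      omega,
    cop_of_rel _ _ _ _ x.2⟩

lemma f1_inj : Function.Injective f1 := by
  rintro ⟨⟨a, b, c, d⟩, h⟩ ⟨⟨a', b', c', d'⟩, h'⟩ heq
  simp only [f1, Subtype.mk.injEq, Prod.mk.injEq] at heq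
  obtain ⟨hp, hq⟩ := heq
  have k1 := key_rel a b c d h
  have k2 := key_rel a' b' c' d' h'
  rw [← hp, ← hq] at k2
  -- now a * (c+d) = c * (a+b) + 1 and a' * (c+d) = c' * (a+b) + 1
  set p := a + b with hpd
  set q := c + d with hqd
  have hco : IsCoprime (p : ℤ) (q : ℤ) := (cop_of_rel a b c d h).isCoprime
  have e1 : ((a : ℤ) - a') * q = ((c : ℤ) - c') * p := by
    have k1' : (a : ℤ) * q = c * p + 1 := by exact_mod_cast k1
    have k2' : (a' : ℤ) * q = c' * p + 1 := by exact_mod_cast k2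
    linear_combination k1' - k2'
  have hpdvd : (p : ℤ) ∣ ((a : ℤ) - a') := by
    refine hco.dvd_of_dvd_mul_right ?_
    exact ⟨(c : ℤ) - c', by linarith [e1]⟩
  have ha1 : 1 ≤ a := a_pos _ _ _ _ h
  have ha1' : 1 ≤ a' := a_pos _ _ _ _ h'
  have haa : a = a' := by
    have : ((a : ℤ) - a') = 0 := by
      refine Int.eq_zero_of_abs_lt_dvd hpdvd ?_
      have hap : a ≤ p := by omega
      have hap' : a' ≤ a + b := by omega
      rw [abs_lt]
      constructor <;> [nlinarith [ha1, ha1', hap, hap']; nlinarith [ha1, ha1', hap, hap']]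
    omega
  have hcc : c = c' := by
    subst haa
    have hp1 : 1 ≤ p := by omega
    have : c * p = c' * p := by omega
    exact Nat.eq_of_mul_eq_mul_right (by omega) this
  refine Subtype.ext ?_
  simp only [Prod.mk.injEq]
  omega

lemma exists_ac (p q : ℕ) (hp : 1 ≤ p) (hq : 1 ≤ q) (hco : Nat.Coprime p q) :
    ∃ a c : ℕ, a ≤ p ∧ a * q = c * p + 1 := by
  rcases Nat.eq_or_lt_of_le hp with h1 | h2
  · exact ⟨1, q - 1, by omega, by rw [← h1]; omega⟩
  · haveI : NeZero p := ⟨by omega⟩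
    set u := ((q : ZMod p)⁻¹).val with hu
    refine ⟨u, u * q / p, (ZMod.val_lt _).le, ?_⟩
    have hmod : (u * q) % p = 1 % p := by
      have : ((u * q : ℕ) : ZMod p) = ((1 : ℕ) : ZMod p) := by
        push_cast
        rw [ZMod.natCast_zmod_val, mul_comm]
        exact ZMod.coe_mul_inv_eq_one q hco.symm
      exact (ZMod.natCast_eq_natCast_iff' _ _ _).mp this
    have h1p : 1 % p = 1 := Nat.mod_eq_of_lt (by omega)
    have h2 := Nat.div_add_mod (u * q) p
    rw [hmod, h1p] at h2
    rw [Nat.mul_comm (u * q / p) p]; exact h2.symm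

lemma f1_surj : Function.Surjective f1 := by
  rintro ⟨⟨p, q⟩, hp, hq, hco⟩
  obtain ⟨a, c, hap, haq⟩ := exists_ac p q hp hq hco
  have ha1 : 1 ≤ a := by
    rcases Nat.eq_zero_or_pos a with h0 | h0
    · subst h0; simp at haq
    · exact h0
  have hcq : c < q := by nlinarith
  have hrel : a * (q - c) = (p - a) * c + 1 := by
    have i1 : a * c ≤ a * q := Nat.mul_le_mul_left a hcq.le
    have i2 : a * c ≤ p * c := Nat.mul_le_mul_right c hap
    have hpc : c * p = p * c := Nat.mul_comm _ _
    rw [Nat.mul_sub, Nat.sub_mul]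
    omega
  refine ⟨⟨(a, p - a, c, q - c), hrel⟩, ?_⟩
  apply Subtype.ext
  simp only [f1, Prod.mk.injEq]
  omega

noncomputable def e1 : S4' ≃ Scop' := Equiv.ofBijective f1 ⟨f1_inj, f1_surj⟩

def f2 : ℕ+ × Scop' → S11' := fun z =>
  ⟨((z.1 : ℕ) * z.2.1.1, (z.1 : ℕ) * z.2.1.2),
    Nat.mul_pos z.1.pos z.2.2.1, Nat.mul_pos z.1.pos z.2.2.2.1⟩

lemma f2_inj : Function.Injective f2 := by
  rintro ⟨n, ⟨⟨p, q⟩, hp, hq, hco⟩⟩ ⟨n', ⟨⟨p', q'⟩, hp', hq', hco'⟩⟩ heq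
  simp only [f2, Subtype.mk.injEq, Prod.mk.injEq] at heq
  obtain ⟨h1, h2⟩ := heq
  have hn : (n : ℕ) = (n' : ℕ) := by
    have g1 : Nat.gcd ((n : ℕ) * p) ((n : ℕ) * q) = (n : ℕ) := by
      rw [Nat.gcd_mul_left, hco, Nat.mul_one]
    have g2 : Nat.gcd ((n' : ℕ) * p') ((n' : ℕ) * q') = (n' : ℕ) := by
      rw [Nat.gcd_mul_left, hco', Nat.mul_one]
    rw [h1, h2, g2] at g1
    exact g1.symm
  have hpp : p = p' := by
    rw [hn] at h1
    exact Nat.eq_of_mul_eq_mul_left n'.pos h1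
  have hqq : q = q' := by
    rw [hn] at h2
    exact Nat.eq_of_mul_eq_mul_left n'.pos h2
  simp only [Prod.mk.injEq, Subtype.mk.injEq]
  exact ⟨PNat.coe_injective hn, by simp [hpp, hqq]⟩

lemma f2_surj : Function.Surjective f2 := by
  rintro ⟨⟨P, Q⟩, hP, hQ⟩
  have hg : 0 < Nat.gcd P Q := Nat.gcd_pos_of_pos_left Q hP
  refine ⟨⟨⟨Nat.gcd P Q, hg⟩, ⟨(P / Nat.gcd P Q, Q / Nat.gcd P Q),
    Nat.div_pos (Nat.le_of_dvd hP (Nat.gcd_dvd_left _ _)) hg,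
    Nat.div_pos (Nat.le_of_dvd hQ (Nat.gcd_dvd_right _ _)) hg,
    Nat.coprime_div_gcd_div_gcd hg⟩⟩, ?_⟩
  apply Subtype.ext
  simp only [f2, Prod.mk.injEq, PNat.mk_ofNat]
  exact ⟨Nat.mul_div_cancel' (Nat.gcd_dvd_left _ _),
    Nat.mul_div_cancel' (Nat.gcd_dvd_right _ _)⟩

noncomputable def e2 : (ℕ+ × Scop') ≃ S11' := Equiv.ofBijective f2 ⟨f2_inj, f2_surj⟩

lemma abs_cpow_nat (n : ℕ) (hn : 1 ≤ n) (w : ℂ) :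
    ‖(n : ℂ) ^ w‖ = (n : ℝ) ^ w.re := by
  rw [← Complex.ofReal_natCast,
    Complex.norm_cpow_eq_rpow_re_of_pos (by exact_mod_cast hn : (0:ℝ) < (n:ℝ))]

lemma rpow_bound {σ : ℝ} (hσ : 0 < σ) {P Q : ℝ} (hP : 1 ≤ P) (hQ : 1 ≤ Q) :
    (P * Q * (P + Q)) ^ (-σ) ≤ P ^ (-(3 * σ / 2)) * Q ^ (-(3 * σ / 2)) := by
  have h0 : (0:ℝ) < P * Q := by nlinarith
  have h1 : (P * Q) ^ ((3:ℝ)/2) = (P * Q) * Real.sqrt (P * Q) := by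
    rw [show (3:ℝ)/2 = 1 + 1/2 by norm_num, Real.rpow_add h0, Real.rpow_one,
      ← Real.sqrt_eq_rpow]
  have h2 : Real.sqrt (P * Q) ≤ P + Q := by
    rw [show P + Q = Real.sqrt ((P + Q)^2) from (Real.sqrt_sq (by linarith)).symm]
    exact Real.sqrt_le_sqrt (by nlinarith)
  have hM : (P * Q) ^ ((3:ℝ)/2) ≤ P * Q * (P + Q) := by
    rw [h1]; nlinarith
  have h3 : (P * Q * (P + Q)) ^ (-σ) ≤ ((P * Q) ^ ((3:ℝ)/2)) ^ (-σ) :=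
    Real.rpow_le_rpow_of_nonpos (by positivity) hM (by linarith)
  have h4 : ((P * Q) ^ ((3:ℝ)/2)) ^ (-σ) = P ^ (-(3 * σ / 2)) * Q ^ (-(3 * σ / 2)) := by
    rw [← Real.rpow_mul h0.le, show (3:ℝ)/2 * -σ = -(3 * σ / 2) by ring,
      Real.mul_rpow (by linarith) (by linarith)]
  linarith

set_option maxHeartbeats 1000000 in
lemma sum3 (s : ℂ) (hs : 2 / 3 < s.re) :
    Summable (fun p : S11' =>
      ‖(((p.1.1 * p.1.2 * (p.1.1 + p.1.2) : ℕ) : ℂ) ^ (-s))‖) := by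
  have hσ : (0:ℝ) < s.re := by linarith
  have ht : -(3 * s.re / 2) < -1 := by linarith
  have hsum : Summable (fun z : ℕ × ℕ =>
      ((z.1 : ℝ) ^ (-(3 * s.re / 2))) * ((z.2 : ℝ) ^ (-(3 * s.re / 2)))) :=
    Summable.mul_of_nonneg (Real.summable_nat_rpow.mpr ht) (Real.summable_nat_rpow.mpr ht)
      (fun n => Real.rpow_nonneg (Nat.cast_nonneg _) _)
      (fun n => Real.rpow_nonneg (Nat.cast_nonneg _) _)
  have hres := hsum.comp_injective
    (Subtype.val_injective : Function.Injective (Subtype.val : S11' → ℕ × ℕ))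
  refine Summable.of_nonneg_of_le (fun _ => norm_nonneg _) ?_ hres
  rintro ⟨⟨p, q⟩, hp, hq⟩
  have hN : 1 ≤ p * q * (p + q) := by
    have : 1 * 1 * (1 + 1) ≤ p * q * (p + q) := by
      apply Nat.mul_le_mul (Nat.mul_le_mul hp hq); omega
    omega
  rw [abs_cpow_nat _ hN, Complex.neg_re]
  push_cast
  exact rpow_bound hσ (by exact_mod_cast hp) (by exact_mod_cast hq)

set_option maxHeartbeats 1000000 in
lemma sum2 (s : ℂ) (hs : 2 / 3 < s.re) :
    Summable (fun p : Scop' =>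
      ‖(((p.1.1 * p.1.2 * (p.1.1 + p.1.2) : ℕ) : ℂ) ^ (-s))‖) := by
  have hinj : Function.Injective (fun x : Scop' => (⟨x.1, x.2.1, x.2.2.1⟩ : S11')) := by
    intro x y h
    exact Subtype.ext (congrArg (fun z : S11' => z.1) h)
  have h2 := (sum3 s hs).comp_injective hinj
  exact h2.congr fun x => rfl

lemma term_eq (x : S4') :
    (x.1.1 + x.1.2.1) * (x.1.2.2.1 + x.1.2.2.2)
      * (x.1.1 + x.1.2.1 + x.1.2.2.1 + x.1.2.2.2)
    = (e1 x).1.1 * (e1 x).1.2 * ((e1 x).1.1 + (e1 x).1.2) := by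
  rcases x with ⟨⟨a, b, c, d⟩, h⟩
  show (a+b) * (c+d) * (a+b+c+d) = (a+b) * (c+d) * ((a+b) + (c+d))
  rw [add_assoc]

set_option maxHeartbeats 1000000 in
lemma sum1 (s : ℂ) (hs : 2 / 3 < s.re) :
    Summable (fun x : S4' =>
      ‖((((x.1.1 + x.1.2.1) * (x.1.2.2.1 + x.1.2.2.2)
          * (x.1.1 + x.1.2.1 + x.1.2.2.1 + x.1.2.2.2) : ℕ) : ℂ) ^ (-s))‖) := by
  have : (fun x : S4' =>
      ‖((((x.1.1 + x.1.2.1) * (x.1.2.2.1 + x.1.2.2.2)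
          * (x.1.1 + x.1.2.1 + x.1.2.2.1 + x.1.2.2.2) : ℕ) : ℂ) ^ (-s))‖)
      = (fun p : Scop' =>
        ‖(((p.1.1 * p.1.2 * (p.1.1 + p.1.2) : ℕ) : ℂ) ^ (-s))‖) ∘ e1 := by
    funext x
    simp only [Function.comp_apply, term_eq x]
  rw [this]
  exact (Equiv.summable_iff e1).mpr (sum2 s hs)

set_option maxHeartbeats 1000000 in
lemma eq1 (s : ℂ) :
    (∑' x : S4', (((x.1.1 + x.1.2.1) * (x.1.2.2.1 + x.1.2.2.2)
          * (x.1.1 + x.1.2.1 + x.1.2.2.1 + x.1.2.2.2) : ℕ) : ℂ) ^ (-s))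
      = ∑' p : Scop', ((p.1.1 * p.1.2 * (p.1.1 + p.1.2) : ℕ) : ℂ) ^ (-s) := by
  rw [← Equiv.tsum_eq e1 (fun p : Scop' => ((p.1.1 * p.1.2 * (p.1.1 + p.1.2) : ℕ) : ℂ) ^ (-s))]
  exact tsum_congr fun x => by rw [term_eq x]

lemma h3re (s : ℂ) : (3 * s).re = 3 * s.re := by
  simp [Complex.mul_re]

lemma neg3s_ne (s : ℂ) (hs : 2 / 3 < s.re) : -(3 * s) ≠ 0 := by
  intro h
  have := congrArg Complex.re h
  rw [Complex.neg_re, h3re] at this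
  simp at this
  linarith

lemma hFn (s : ℂ) (hs : 2 / 3 < s.re) :
    Summable (fun n : ℕ+ => ‖((n : ℕ) : ℂ) ^ (-(3 * s))‖) := by
  have hnat : (fun n : ℕ => ‖(n : ℂ) ^ (-(3 * s))‖)
      = fun n : ℕ => (n : ℝ) ^ (-(3 * s.re)) := by
    funext n
    rcases Nat.eq_zero_or_pos n with h0 | h0
    · subst h0
      rw [Nat.cast_zero, Complex.zero_cpow (neg3s_ne s hs), Nat.cast_zero,
        Real.zero_rpow (by intro h; linarith [neg_eq_zero.mp h] : -(3 * s.re) ≠ 0)]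
      simp
    · rw [abs_cpow_nat n h0, Complex.neg_re, h3re]
  have hN : Summable (fun n : ℕ => ‖(n : ℂ) ^ (-(3 * s))‖) := by
    rw [hnat]
    exact Real.summable_nat_rpow.mpr (by linarith)
  have h2 := hN.comp_injective PNat.coe_injective
  exact h2.congr fun _ => rfl

lemma zeta_pnat (s : ℂ) (hs : 2 / 3 < s.re) :
    ∑' n : ℕ+, ((n : ℕ) : ℂ) ^ (-(3 * s)) = riemannZeta (3 * s) := by
  rw [zeta_eq_tsum_one_div_nat_cpow (by rw [h3re]; linarith)]
  have hsupp : Function.support (fun n : ℕ => 1 / (n : ℂ) ^ (3 * s))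
      ⊆ Set.range (fun m : ℕ+ => (m : ℕ)) := by
    intro n hn
    rcases Nat.eq_zero_or_pos n with h0 | h0
    · exfalso
      apply hn
      subst h0
      show 1 / ((0:ℕ):ℂ) ^ (3 * s) = 0
      rw [Nat.cast_zero, Complex.zero_cpow (by simpa using neg3s_ne s hs)]
      simp
    · exact ⟨⟨n, h0⟩, rfl⟩
  have h := Function.Injective.tsum_eq (f := fun n : ℕ => 1 / (n : ℂ) ^ (3 * s))
    (g := fun m : ℕ+ => (m : ℕ)) (fun a b hab => PNat.coe_injective hab) hsupp
  rw [← h]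
  exact tsum_congr fun n => by simp only [Complex.cpow_neg, one_div]

set_option maxHeartbeats 1000000 in
lemma eq2 (s : ℂ) (hs : 2 / 3 < s.re) :
    (∑' p : S11', ((p.1.1 * p.1.2 * (p.1.1 + p.1.2) : ℕ) : ℂ) ^ (-s))
      = riemannZeta (3 * s)
        * ∑' p : Scop', ((p.1.1 * p.1.2 * (p.1.1 + p.1.2) : ℕ) : ℂ) ^ (-s) := by
  have hpt : ∀ z : ℕ+ × Scop',
      ((((e2 z).1.1 * (e2 z).1.2 * ((e2 z).1.1 + (e2 z).1.2) : ℕ)) : ℂ) ^ (-s)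
      = ((z.1 : ℕ) : ℂ) ^ (-(3 * s))
        * ((z.2.1.1 * z.2.1.2 * (z.2.1.1 + z.2.1.2) : ℕ) : ℂ) ^ (-s) := by
    rintro ⟨n, ⟨⟨p, q⟩, hp, hq, hco⟩⟩
    show ((((n:ℕ) * p) * ((n:ℕ) * q) * (((n:ℕ) * p) + ((n:ℕ) * q)) : ℕ) : ℂ) ^ (-s)
      = ((n : ℕ) : ℂ) ^ (-(3 * s)) * ((p * q * (p + q) : ℕ) : ℂ) ^ (-s)
    have hnat : ((n:ℕ) * p) * ((n:ℕ) * q) * (((n:ℕ) * p) + ((n:ℕ) * q))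
        = (n:ℕ) ^ 3 * (p * q * (p + q)) := by ring
    rw [hnat, Nat.cast_mul, Complex.natCast_mul_natCast_cpow, Nat.cast_pow,
      ← Complex.natCast_cpow_natCast_mul, show ((3:ℕ):ℂ) * (-s) = -(3 * s) by push_cast; ring]
  have hTn : Summable (fun x : Scop' =>
      ‖((x.1.1 * x.1.2 * (x.1.1 + x.1.2) : ℕ) : ℂ) ^ (-s)‖) :=
    (sum2 s hs).congr fun x => rfl
  calc (∑' p : S11', ((p.1.1 * p.1.2 * (p.1.1 + p.1.2) : ℕ) : ℂ) ^ (-s))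
      = ∑' z : ℕ+ × Scop', ((z.1 : ℕ) : ℂ) ^ (-(3 * s))
          * ((z.2.1.1 * z.2.1.2 * (z.2.1.1 + z.2.1.2) : ℕ) : ℂ) ^ (-s) := by
        rw [← Equiv.tsum_eq e2 (fun p : S11' =>
          ((p.1.1 * p.1.2 * (p.1.1 + p.1.2) : ℕ) : ℂ) ^ (-s))]
        exact tsum_congr hpt
    _ = (∑' n : ℕ+, ((n : ℕ) : ℂ) ^ (-(3 * s)))
          * ∑' p : Scop', ((p.1.1 * p.1.2 * (p.1.1 + p.1.2) : ℕ) : ℂ) ^ (-s) :=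
        (tsum_mul_tsum_of_summable_norm (hFn s hs) hTn).symm
    _ = riemannZeta (3 * s)
          * ∑' p : Scop', ((p.1.1 * p.1.2 * (p.1.1 + p.1.2) : ℕ) : ℂ) ^ (-s) := by
        rw [zeta_pnat s hs]



set_option maxHeartbeats 1000000 in
theorem stmt18 (s : ℂ) (hs : 2 / 3 < s.re) :
    Summable (fun x : {q : ℕ × ℕ × ℕ × ℕ // q.1 * q.2.2.2 = q.2.1 * q.2.2.1 + 1} =>
      ‖((((x.1.1 + x.1.2.1) * (x.1.2.2.1 + x.1.2.2.2)
          * (x.1.1 + x.1.2.1 + x.1.2.2.1 + x.1.2.2.2) : ℕ) : ℂ) ^ (-s))‖) ∧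
    Summable (fun p : {p : ℕ × ℕ // 1 ≤ p.1 ∧ 1 ≤ p.2 ∧ Nat.Coprime p.1 p.2} =>
      ‖(((p.1.1 * p.1.2 * (p.1.1 + p.1.2) : ℕ) : ℂ) ^ (-s))‖) ∧
    Summable (fun p : {p : ℕ × ℕ // 1 ≤ p.1 ∧ 1 ≤ p.2} =>
      ‖(((p.1.1 * p.1.2 * (p.1.1 + p.1.2) : ℕ) : ℂ) ^ (-s))‖) ∧
    (∑' x : {q : ℕ × ℕ × ℕ × ℕ // q.1 * q.2.2.2 = q.2.1 * q.2.2.1 + 1},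
        (((x.1.1 + x.1.2.1) * (x.1.2.2.1 + x.1.2.2.2)
          * (x.1.1 + x.1.2.1 + x.1.2.2.1 + x.1.2.2.2) : ℕ) : ℂ) ^ (-s))
      = (∑' p : {p : ℕ × ℕ // 1 ≤ p.1 ∧ 1 ≤ p.2 ∧ Nat.Coprime p.1 p.2},
          ((p.1.1 * p.1.2 * (p.1.1 + p.1.2) : ℕ) : ℂ) ^ (-s)) ∧
    (∑' p : {p : ℕ × ℕ // 1 ≤ p.1 ∧ 1 ≤ p.2},
        ((p.1.1 * p.1.2 * (p.1.1 + p.1.2) : ℕ) : ℂ) ^ (-s))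
      = riemannZeta (3 * s)
        * ∑' p : {p : ℕ × ℕ // 1 ≤ p.1 ∧ 1 ≤ p.2 ∧ Nat.Coprime p.1 p.2},
            ((p.1.1 * p.1.2 * (p.1.1 + p.1.2) : ℕ) : ℂ) ^ (-s) := by
  exact ⟨sum1 s hs, sum2 s hs, sum3 s hs, eq1 s, eq2 s hs⟩
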